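/- arXiv:2601.12965 — 4 statements merged into one kernel-verified Lean document; each statement's English description precedes it below -/
import Mathlib

section
/- For any 0 < a < b < ∞ and s ∈ ℝ, the limit as z → ∞ of z·e^{z/b²}·Φ_a^b(s,z) equals b^{-2(s-1)}. -/
open MeasureTheory Real Filter

/-- `Φ a b s z = ∫_{1/b²}^{1/a²} u^(s-1) e^{-z u} du`. -/
noncomputable def Phi (a b s z : ℝ) : ℝ :=
  ∫ u in (1 / b ^ 2)..(1 / a ^ 2), u ^ (s - 1) * Real.exp (-z * u)

/-- For `0 < a < b` and `s ∈ ℝ`, `z e^{z/b²} Φ_a^b(s,z) → b^{-2(s-1)}` as `z → ∞`. -/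
theorem phi_asymptotic (a b s : ℝ) (ha : 0 < a) (hab : a < b) :
    Tendsto (fun z : ℝ => z * Real.exp (z / b ^ 2) * Phi a b s z) atTop
      (nhds (b ^ (-(2 : ℝ) * (s - 1)))) := by
  have hb : 0 < b := ha.trans hab
  set c : ℝ := 1 / b ^ 2 with hc_def
  set d : ℝ := 1 / a ^ 2 with hd_def
  have hc : 0 < c := by positivity
  have hd : 0 < d := by positivity
  have hcd : c < d := by
    apply one_div_lt_one_div_of_lt
    · positivity
    · exact pow_lt_pow_left₀ hab ha.le two_ne_zero
  have hdc : 0 < d - c := sub_pos.mpr hcd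
  -- the target value equals c ^ (s-1)
  have htarget : b ^ (-(2 : ℝ) * (s - 1)) = c ^ (s - 1) := by
    rw [Real.rpow_mul hb.le]
    congr 1
    rw [Real.rpow_neg hb.le, hc_def, one_div]
    congr 1
    rw [show (2 : ℝ) = ((2 : ℕ) : ℝ) by norm_num, Real.rpow_natCast]
  -- family of functions for dominated convergence
  set F : ℝ → ℝ → ℝ := fun z =>
    Set.indicator (Set.Ioc 0 (z * (d - c))) (fun x => (x / z + c) ^ (s - 1) * Real.exp (-x))
    with hF_def
  set L : ℝ → ℝ := Set.indicator (Set.Ioi 0) (fun x => c ^ (s - 1) * Real.exp (-x)) with hL_def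
  set M : ℝ := max (c ^ (s - 1)) (d ^ (s - 1)) with hM_def
  set B : ℝ → ℝ := Set.indicator (Set.Ioi (0 : ℝ)) (fun x => M * Real.exp (-x)) with hB_def
  have hMc : c ^ (s - 1) ≤ M := le_max_left _ _
  have hMd : d ^ (s - 1) ≤ M := le_max_right _ _
  -- key identity
  have key : ∀ z : ℝ, 0 < z →
      z * Real.exp (z / b ^ 2) * Phi a b s z = ∫ x, F z x := by
    intro z hz
    have h := intervalIntegral.integral_comp_div_add (a := 0) (b := z * (d - c))
      (fun u => u ^ (s - 1) * Real.exp (-(z * (u - c)))) hz.ne' c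
    have harg : ∀ x : ℝ, Real.exp (-(z * (x / z + c - c))) = Real.exp (-x) := by
      intro x
      rw [add_sub_cancel_right]
      congr 1
      field_simp
    simp only [harg] at h
    have hend : z * (d - c) / z + c = d := by field_simp; ring
    rw [zero_div, zero_add, hend] at h
    have h2 : (∫ u in c..d, u ^ (s - 1) * Real.exp (-(z * (u - c))))
        = Real.exp (z * c) * Phi a b s z := by
      have : ∀ u : ℝ, u ^ (s - 1) * Real.exp (-(z * (u - c)))
          = Real.exp (z * c) * (u ^ (s - 1) * Real.exp (-z * u)) := by
        intro u
        rw [show -(z * (u - c)) = z * c + -z * u by ring, Real.exp_add]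
        ring
      simp only [this]
      rw [intervalIntegral.integral_const_mul]
      rfl
    rw [h2, smul_eq_mul] at h
    have hT : (0 : ℝ) ≤ z * (d - c) := by positivity
    have h3 : (∫ x, F z x) = ∫ x in (0 : ℝ)..(z * (d - c)),
        (x / z + c) ^ (s - 1) * Real.exp (-x) := by
      rw [hF_def]
      rw [MeasureTheory.integral_indicator measurableSet_Ioc,
        intervalIntegral.integral_of_le hT]
    rw [h3, h, hc_def]
    rw [show z * (1 / b ^ 2) = z / b ^ 2 by ring]
    ring
  -- measurability
  have hmeas : ∀ z : ℝ, AEStronglyMeasurable (F z) volume := by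
    intro z
    apply (Measurable.indicator _ measurableSet_Ioc).aestronglyMeasurable
    fun_prop
  -- bound
  have hBnonneg : ∀ x, 0 ≤ B x := by
    intro x
    apply Set.indicator_nonneg
    intro y _
    have : 0 ≤ c ^ (s - 1) := Real.rpow_nonneg hc.le _
    have hM0 : 0 ≤ M := le_trans this hMc
    positivity
  have hbound : ∀ᶠ z : ℝ in atTop, ∀ᵐ x : ℝ, ‖F z x‖ ≤ B x := by
    filter_upwards [eventually_gt_atTop 0] with z hz
    refine Filter.Eventually.of_forall fun x => ?_
    by_cases hx : x ∈ Set.Ioc 0 (z * (d - c))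
    · rw [hF_def]
      simp only [Set.indicator_of_mem hx]
      have hx0 : 0 < x := hx.1
      have hBx : B x = M * Real.exp (-x) := Set.indicator_of_mem hx0 _
      have hu1 : c < x / z + c := by
        have : 0 < x / z := div_pos hx0 hz
        linarith
      have hu2 : x / z + c ≤ d := by
        have : x / z ≤ d - c := (div_le_iff₀ hz).mpr (by linarith [hx.2])
        linarith
      have hu0 : 0 < x / z + c := hc.trans hu1
      have hrle : (x / z + c) ^ (s - 1) ≤ M := by
        rcases le_or_gt 0 (s - 1) with h | h
        · exact le_trans (Real.rpow_le_rpow hu0.le hu2 h) hMd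
        · exact le_trans (Real.rpow_le_rpow_of_nonpos hc hu1.le h.le) hMc
      rw [hBx, Real.norm_eq_abs, abs_of_nonneg (by positivity)]
      exact mul_le_mul_of_nonneg_right hrle (Real.exp_pos _).le
    · rw [hF_def]
      simp only [Set.indicator_of_notMem hx]
      simpa using hBnonneg x
  -- bound integrable
  have hBint : Integrable B := by
    rw [hB_def]
    apply IntegrableOn.integrable_indicator _ measurableSet_Ioi
    have h1 : IntegrableOn (fun x : ℝ => Real.exp (-x)) (Set.Ioi 0) := by
      have := exp_neg_integrableOn_Ioi 0 (one_pos)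
      simpa using this
    exact h1.const_mul M
  -- pointwise limit
  have hlim : ∀ᵐ x : ℝ, Tendsto (fun z => F z x) atTop (nhds (L x)) := by
    have h0 : ∀ᵐ x : ℝ, x ≠ 0 := by
      rw [ae_iff]
      have : {x : ℝ | ¬x ≠ 0} = {0} := by ext x; simp
      rw [this]
      exact measure_singleton 0
    filter_upwards [h0] with x hx
    rcases lt_or_gt_of_ne hx with hneg | hpos
    · have hFx : ∀ z : ℝ, F z x = 0 := by
        intro z
        apply Set.indicator_of_notMem
        intro hmem
        exact absurd hmem.1 (not_lt.mpr hneg.le)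
      have hLx : L x = 0 := Set.indicator_of_notMem (by simpa using hneg.not_gt) _
      rw [hLx]
      simpa [hFx] using tendsto_const_nhds (α := ℝ) (f := atTop) (a := (0 : ℝ))
    · have hLx : L x = c ^ (s - 1) * Real.exp (-x) := Set.indicator_of_mem hpos _
      rw [hLx]
      have h1 : Tendsto (fun z : ℝ => x / z + c) atTop (nhds c) := by
        have : Tendsto (fun z : ℝ => x / z) atTop (nhds 0) :=
          Tendsto.div_atTop tendsto_const_nhds tendsto_id
        simpa using this.add tendsto_const_nhds
      have h2 : Tendsto (fun z : ℝ => (x / z + c) ^ (s - 1)) atTop (nhds (c ^ (s - 1))) :=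
        ((Real.continuousAt_rpow_const c (s - 1) (Or.inl hc.ne')).tendsto).comp h1
      have h3 : Tendsto (fun z : ℝ => (x / z + c) ^ (s - 1) * Real.exp (-x)) atTop
          (nhds (c ^ (s - 1) * Real.exp (-x))) := h2.mul_const _
      apply h3.congr'
      filter_upwards [eventually_ge_atTop (x / (d - c)), eventually_gt_atTop (0 : ℝ)]
        with z hz1 hz2
      have hmem : x ∈ Set.Ioc 0 (z * (d - c)) := by
        constructor
        · exact hpos
        · exact (div_le_iff₀ hdc).mp hz1
      simp only [hF_def]
      exact (Set.indicator_of_mem hmem (fun y => (y / z + c) ^ (s - 1) * Real.exp (-y))).symm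
  -- integral of the limit
  have hLint : (∫ x, L x) = c ^ (s - 1) := by
    rw [hL_def, MeasureTheory.integral_indicator measurableSet_Ioi,
      MeasureTheory.integral_const_mul, integral_exp_neg_Ioi_zero, mul_one]
  have main : Tendsto (fun z : ℝ => ∫ x, F z x) atTop (nhds (∫ x, L x)) :=
    MeasureTheory.tendsto_integral_filter_of_dominated_convergence B
      (Filter.Eventually.of_forall hmeas) hbound hBint hlim
  rw [htarget, ← hLint]
  apply main.congr'
  filter_upwards [eventually_gt_atTop (0 : ℝ)] with z hz
  exact (key z hz).symm
end

section
/- For any 0 < b < ∞, s > 0, and k > 0, the limit as a → 0⁺ of a^{2s}·Φ_a^b(s, k·a²) equals k^{-s} · ∫_0^k t^{s-1} e^{-t} dt, and this limit is finite. -/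
open MeasureTheory Real Filter

lemma phi_key (b s k : ℝ) (hb : 0 < b) (hk : 0 < k) (a : ℝ) (ha : 0 < a) :
    a ^ (2 * s) * Phi a b s (k * a ^ 2)
      = k ^ (-s) * ∫ t in (k * a ^ 2 / b ^ 2)..k, t ^ (s - 1) * Real.exp (-t) := by
  set c := k * a ^ 2 with hc
  have hcpos : 0 < c := by positivity
  have h1 : Phi a b s c
      = ∫ u in (1 / b ^ 2)..(1 / a ^ 2), c ^ (1 - s) * ((c * u) ^ (s - 1) * Real.exp (-(c * u))) := by
    unfold Phi
    apply intervalIntegral.integral_congr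
    intro u hu
    have hu0 : 0 < u := by
      rcases Set.mem_uIcc.1 hu with h | h
      · exact lt_of_lt_of_le (by positivity) h.1
      · exact lt_of_lt_of_le (by positivity) h.1
    have key : c ^ (1 - s) * ((c * u) ^ (s - 1) * Real.exp (-(c * u)))
        = u ^ (s - 1) * Real.exp (-c * u) := by
      rw [Real.mul_rpow hcpos.le hu0.le, show -(c * u) = -c * u by ring,
        ← mul_assoc, ← mul_assoc, ← Real.rpow_add hcpos]
      norm_num
    exact key.symm
  have h2 : (∫ u in (1 / b ^ 2)..(1 / a ^ 2), (c * u) ^ (s - 1) * Real.exp (-(c * u)))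
      = c⁻¹ • ∫ t in (c * (1 / b ^ 2))..(c * (1 / a ^ 2)), t ^ (s - 1) * Real.exp (-t) :=
    intervalIntegral.integral_comp_mul_left (fun t => t ^ (s - 1) * Real.exp (-t)) hcpos.ne'
  have ha2 : c * (1 / a ^ 2) = k := by field_simp [hc]; rw [hc]; ring
  have hb2 : c * (1 / b ^ 2) = c / b ^ 2 := by ring
  rw [h1, intervalIntegral.integral_const_mul, h2, ha2, hb2, smul_eq_mul]
  have hpow : a ^ (2 * s) * (c ^ (1 - s) * c⁻¹) = k ^ (-s) := by
    have h3 : c ^ (1 - s) * c⁻¹ = c ^ (-s) := by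
      rw [← Real.rpow_neg_one c, ← Real.rpow_add hcpos]
      congr 1
      ring
    rw [h3, hc, Real.mul_rpow hk.le (by positivity), ← Real.rpow_natCast a 2,
      ← Real.rpow_mul ha.le, mul_comm (k ^ (-s)), ← mul_assoc, ← Real.rpow_add ha]
    norm_num
  linear_combination (∫ t in (c / b ^ 2)..k, t ^ (s - 1) * Real.exp (-t)) * hpow

/-- For `0 < b`, `s > 0`, `k > 0`,
`a^{2s} Φ_a^b(s, k a²) → k^{-s} ∫_0^k t^{s-1} e^{-t} dt` as `a → 0⁺`. -/
theorem phi_limit_ka (b s k : ℝ) (hb : 0 < b) (hs : 0 < s) (hk : 0 < k) :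
    Tendsto (fun a : ℝ => a ^ (2 * s) * Phi a b s (k * a ^ 2))
      (nhdsWithin 0 (Set.Ioi 0))
      (nhds (k ^ (-s) * ∫ t in (0 : ℝ)..k, t ^ (s - 1) * Real.exp (-t))) := by
  set f : ℝ → ℝ := fun t => t ^ (s - 1) * Real.exp (-t) with hf
  have hint : ∀ x y : ℝ, IntervalIntegrable f volume x y := fun x y =>
    (intervalIntegral.intervalIntegrable_rpow' (by linarith)).mul_continuousOn
      (Continuous.continuousOn (by continuity))
  set G : ℝ → ℝ := fun x => ∫ t in (0:ℝ)..x, f t with hG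
  have hGcont : ContinuousOn G (Set.uIcc 0 k) :=
    intervalIntegral.continuousOn_primitive_interval' (hint 0 k) Set.left_mem_uIcc
  set φ : ℝ → ℝ := fun a => k * a ^ 2 / b ^ 2 with hφ
  have hφt : Tendsto φ (nhdsWithin 0 (Set.Ioi 0)) (nhdsWithin 0 (Set.uIcc 0 k)) := by
    rw [tendsto_nhdsWithin_iff]
    constructor
    · have : Tendsto φ (nhds 0) (nhds (φ 0)) := (Continuous.tendsto (by continuity)) 0
      simpa [hφ] using this.mono_left nhdsWithin_le_nhds
    · filter_upwards [Ioo_mem_nhdsGT_of_mem ⟨le_refl (0:ℝ), hb⟩] with a ha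
      have ha0 : 0 < a := ha.1
      have hab : a < b := ha.2
      have h1 : 0 ≤ φ a := by positivity
      have h2 : φ a ≤ k := by
        rw [hφ, div_le_iff₀ (by positivity)]
        have : a ^ 2 ≤ b ^ 2 := by nlinarith
        nlinarith
      exact Set.mem_uIcc.2 (Or.inl ⟨h1, h2⟩)
  have hGt : Tendsto (fun a => G (φ a)) (nhdsWithin 0 (Set.Ioi 0)) (nhds 0) := by
    have h0 : (0:ℝ) ∈ Set.uIcc 0 k := Set.left_mem_uIcc
    have := (hGcont 0 h0).tendsto.comp hφt
    simpa [hG, intervalIntegral.integral_same, Function.comp_def] using this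
  have key : Tendsto (fun a => k ^ (-s) * (G k - G (φ a)))
      (nhdsWithin 0 (Set.Ioi 0)) (nhds (k ^ (-s) * ∫ t in (0:ℝ)..k, f t)) := by
    have h4 : Tendsto (fun a => G k - G (φ a)) (nhdsWithin 0 (Set.Ioi 0)) (nhds (G k - 0)) :=
      tendsto_const_nhds.sub hGt
    rw [sub_zero] at h4
    exact tendsto_const_nhds.mul h4
  refine key.congr' ?_
  filter_upwards [self_mem_nhdsWithin] with a (ha : 0 < a)
  have hsub : G k - G (φ a) = ∫ t in (φ a)..k, f t :=
    intervalIntegral.integral_interval_sub_left (hint 0 k) (hint 0 (φ a))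
  rw [hsub, ← phi_key b s k hb hk a ha]
end

section
/- Let μ be a compactly supported probability measure on ℝ^d, 0 < a < b < ∞, and s₁, s₂ ∈ ℝ. Then the ratio L_a^b(s₁,x) / L_a^b(s₂,x) converges uniformly to b^{2(s₂−s₁)} as |x| → ∞; i.e., lim_{R→∞} sup_{|x|≥R} | L_a^b(s₁,x)/L_a^b(s₂,x) − b^{2(s₂−s₁)} | = 0. -/
open MeasureTheory Real Filter

section AuxLemmas
open intervalIntegral

namespace LRatioAux

/-- generic version of Phi -/
noncomputable def F (α β s z : ℝ) : ℝ := ∫ u in α..β, u ^ (s - 1) * Real.exp (-z * u)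

variable {α β : ℝ}

lemma contOn (hα : 0 < α) (s z : ℝ) :
    ContinuousOn (fun u : ℝ => u ^ (s - 1) * Real.exp (-z * u)) (Set.Ici α) := by
  apply ContinuousOn.mul
  · intro u hu
    exact ((Real.continuousAt_rpow_const u (s-1) (Or.inl (hα.trans_le hu).ne')).continuousWithinAt)
  · exact (Real.continuous_exp.comp (continuous_const.mul continuous_id)).continuousOn

lemma intble {γ δ : ℝ} (hα : 0 < α) (hγ : α ≤ γ) (hδ : α ≤ δ) (s z : ℝ) :
    IntervalIntegrable (fun u : ℝ => u ^ (s - 1) * Real.exp (-z * u)) volume γ δ :=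
  ((contOn hα s z).mono (fun u hu => (le_inf hγ hδ).trans hu.1)).intervalIntegrable

end LRatioAux

namespace LRatioAux2
open LRatioAux

variable {α β : ℝ}

lemma F_pos (hα : 0 < α) (hαβ : α < β) (s z : ℝ) : 0 < F α β s z := by
  apply intervalIntegral_pos_of_pos_on (intble hα le_rfl hαβ.le s z)
  · intro u hu
    exact mul_pos (Real.rpow_pos_of_pos (hα.trans hu.1) _) (Real.exp_pos _)
  · exact hαβ

lemma F_anti (hα : 0 < α) (hαβ : α < β) (s : ℝ) {z₁ z₂ : ℝ} (h : z₁ ≤ z₂) :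
    F α β s z₂ ≤ F α β s z₁ := by
  apply intervalIntegral.integral_mono_on hαβ.le (intble hα le_rfl hαβ.le s z₂)
    (intble hα le_rfl hαβ.le s z₁)
  intro u hu
  have hu0 : 0 < u := hα.trans_le hu.1
  have : -z₂ * u ≤ -z₁ * u := by nlinarith
  exact mul_le_mul_of_nonneg_left (Real.exp_le_exp.2 this) (Real.rpow_nonneg hu0.le _)

lemma F_cont (hα : 0 < α) (hαβ : α < β) (s : ℝ) : Continuous (fun z => F α β s z) := by
  have key : ∀ z, F α β s z = ∫ u in α..β, (max u α) ^ (s - 1) * Real.exp (-z * u) := by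
    intro z
    apply intervalIntegral.integral_congr
    intro u hu
    rw [Set.uIcc_of_le hαβ.le] at hu
    simp only [max_eq_left hu.1]
  simp_rw [key]
  apply intervalIntegral.continuous_parametric_intervalIntegral_of_continuous'
    (f := fun z u => (max u α) ^ (s - 1) * Real.exp (-z * u))
  have h1 : ContinuousOn (fun v : ℝ => v ^ (s - 1)) (Set.Ici α) :=
    fun v hv => (Real.continuousAt_rpow_const v _ (Or.inl (hα.trans_le hv).ne')).continuousWithinAt
  have h2 : Continuous (fun p : ℝ × ℝ => max p.2 α) := by fun_prop
  exact ((h1.comp_continuous h2 (fun p => Set.mem_Ici.mpr (le_max_right _ _))).mul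
    (Real.continuous_exp.comp (by fun_prop)))

end LRatioAux2

namespace LRatioAux3
open LRatioAux LRatioAux2

variable {α β : ℝ}

lemma rpow_bound (hα : 0 < α) (p : ℝ) {u : ℝ} (hu : u ∈ Set.Icc α β) :
    Real.exp (-(|p| * (|Real.log α| + |Real.log β|))) ≤ u ^ p ∧
      u ^ p ≤ Real.exp (|p| * (|Real.log α| + |Real.log β|)) := by
  have hu0 : 0 < u := hα.trans_le hu.1
  have hl1 : Real.log α ≤ Real.log u := Real.log_le_log hα hu.1
  have hl2 : Real.log u ≤ Real.log β := Real.log_le_log hu0 hu.2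
  have habs : |Real.log u| ≤ |Real.log α| + |Real.log β| := by
    rw [abs_le]
    constructor
    · have := neg_abs_le (Real.log α); have := abs_nonneg (Real.log β); linarith
    · have := le_abs_self (Real.log β); have := abs_nonneg (Real.log α); linarith
  have hb : |p * Real.log u| ≤ |p| * (|Real.log α| + |Real.log β|) := by
    rw [abs_mul]; exact mul_le_mul_of_nonneg_left habs (abs_nonneg p)
  rw [Real.rpow_def_of_pos hu0, mul_comm (Real.log u) p]
  rcases abs_le.1 hb with ⟨h1, h2⟩
  exact ⟨Real.exp_le_exp.2 h1, Real.exp_le_exp.2 h2⟩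

set_option maxHeartbeats 1000000 in
lemma F_key (hα : 0 < α) (hαβ : α < β) (s₁ s₂ : ℝ) {ε : ℝ} (hε : 0 < ε) :
    ∃ Z : ℝ, 0 ≤ Z ∧ ∀ z, Z ≤ z →
      |F α β s₁ z - α ^ (s₁ - s₂) * F α β s₂ z| ≤ ε * F α β s₂ z := by
  set c := α ^ (s₁ - s₂) with hc
  have hcont : ContinuousAt (fun u : ℝ => u ^ (s₁ - s₂)) α :=
    Real.continuousAt_rpow_const α _ (Or.inl hα.ne')
  obtain ⟨δ', hδ'pos, hδ'2⟩ := Metric.continuousAt_iff.mp hcont (ε/2) (half_pos hε)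
  set δ : ℝ := min (δ'/2) ((β - α)/2) with hδdef
  have hδpos : 0 < δ := lt_min (by linarith) (by linarith)
  have hδlt : δ < δ' := (min_le_left _ _).trans_lt (by linarith)
  have hδβ : δ ≤ (β - α)/2 := min_le_right _ _
  set γ : ℝ := α + δ with hγdef
  have hαγ : α < γ := by simp only [hγdef]; linarith
  have hγβ : γ < β := by simp only [hγdef]; linarith
  have hnear : ∀ u ∈ Set.Icc α γ, |u ^ (s₁ - s₂) - c| ≤ ε / 2 := by
    intro u hu
    have hd : dist u α < δ' := by
      rw [Real.dist_eq, abs_of_nonneg (by linarith [hu.1])]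
      have := hu.2; simp only [hγdef] at this; linarith
    exact (le_of_lt (by simpa [Real.dist_eq, hc] using hδ'2 hd))
  set Λ : ℝ := |Real.log α| + |Real.log β| with hΛ
  set B₁ : ℝ := Real.exp (|s₁ - s₂| * Λ) with hB₁
  set M : ℝ := Real.exp (|s₂ - 1| * Λ) with hM
  set m : ℝ := Real.exp (-(|s₂ - 1| * Λ)) with hm
  set C : ℝ := B₁ + |c| with hC
  have hMpos : 0 < M := Real.exp_pos _
  have hmpos : 0 < m := Real.exp_pos _
  have hCpos : 0 < C := by positivity
  set Q : ℝ := C * M * (β - γ) with hQ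
  have hQpos : 0 < Q := by
    apply mul_pos (mul_pos hCpos hMpos); linarith
  set t : ℝ := (ε/2) * (m * (δ/2)) with ht
  have htpos : 0 < t := by positivity
  -- find Z₀
  have htend : Tendsto (fun z : ℝ => Q * Real.exp (-(z * (δ/2)))) atTop (nhds 0) := by
    rw [show (0:ℝ) = Q * 0 by ring]
    exact (Real.tendsto_exp_atBot.comp
      (tendsto_neg_atBot_iff.mpr (tendsto_id.atTop_mul_const (by linarith : (0:ℝ) < δ/2)))).const_mul Q
  obtain ⟨Z₀, hZ₀⟩ := (eventually_atTop.mp (htend.eventually (gt_mem_nhds htpos)))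
  refine ⟨max Z₀ 0, le_max_right _ _, ?_⟩
  intro z hz
  have hz0 : 0 ≤ z := le_trans (le_max_right _ _) hz
  have hzZ₀ : Z₀ ≤ z := le_trans (le_max_left _ _) hz
  set f₁ : ℝ → ℝ := fun u => u ^ (s₁ - 1) * Real.exp (-z * u) with hf₁
  set f₂ : ℝ → ℝ := fun u => u ^ (s₂ - 1) * Real.exp (-z * u) with hf₂
  have i1 : ∀ p q : ℝ, α ≤ p → α ≤ q → IntervalIntegrable f₁ volume p q :=
    fun p q hp hq => intble hα hp hq s₁ z
  have i2 : ∀ p q : ℝ, α ≤ p → α ≤ q → IntervalIntegrable f₂ volume p q :=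
    fun p q hp hq => intble hα hp hq s₂ z
  set g : ℝ → ℝ := fun u => f₁ u - c * f₂ u with hgdef
  have ig : ∀ p q : ℝ, α ≤ p → α ≤ q → IntervalIntegrable g volume p q :=
    fun p q hp hq => (i1 p q hp hq).sub ((i2 p q hp hq).const_mul c)
  have hf₂nonneg : ∀ u : ℝ, 0 < u → 0 ≤ f₂ u := fun u hu =>
    mul_nonneg (Real.rpow_nonneg hu.le _) (Real.exp_pos _).le
  -- the factorization of g
  have hgfact : ∀ u : ℝ, 0 < u → g u = (u ^ (s₁ - s₂) - c) * f₂ u := by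
    intro u hu
    have h1 : u ^ (s₁ - s₂) * u ^ (s₂ - 1) = u ^ (s₁ - 1) := by
      rw [← Real.rpow_add hu]; ring_nf
    simp only [hgdef, hf₁, hf₂]
    rw [← h1]; ring
  have hFsub : F α β s₁ z - c * F α β s₂ z = ∫ u in α..β, g u := by
    rw [F, F, ← intervalIntegral.integral_const_mul,
      ← intervalIntegral.integral_sub (i1 α β le_rfl hαβ.le)
        ((i2 α β le_rfl hαβ.le).const_mul c)]
  have habs : |F α β s₁ z - c * F α β s₂ z| ≤ ∫ u in α..β, |g u| := by
    rw [hFsub]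
    exact intervalIntegral.abs_integral_le_integral_abs hαβ.le
  have hsplit : (∫ u in α..β, |g u|) = (∫ u in α..γ, |g u|) + ∫ u in γ..β, |g u| :=
    (intervalIntegral.integral_add_adjacent_intervals
      (ig α γ le_rfl hαγ.le).abs (ig γ β hαγ.le hαβ.le).abs).symm
  -- Bound A on [α, γ]
  have hA : (∫ u in α..γ, |g u|) ≤ (ε/2) * F α β s₂ z := by
    have hpt : ∀ u ∈ Set.Icc α γ, |g u| ≤ (ε/2) * f₂ u := by
      intro u hu
      have hu0 : 0 < u := hα.trans_le hu.1
      rw [hgfact u hu0, abs_mul, abs_of_nonneg (hf₂nonneg u hu0)]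
      exact mul_le_mul_of_nonneg_right (hnear u hu) (hf₂nonneg u hu0)
    have h1 : (∫ u in α..γ, |g u|) ≤ ∫ u in α..γ, (ε/2) * f₂ u :=
      intervalIntegral.integral_mono_on hαγ.le (ig α γ le_rfl hαγ.le).abs
        ((i2 α γ le_rfl hαγ.le).const_mul _) hpt
    have h2 : (∫ u in α..γ, f₂ u) ≤ F α β s₂ z := by
      have htail : 0 ≤ ∫ u in γ..β, f₂ u :=
        intervalIntegral.integral_nonneg hγβ.le
          (fun u hu => hf₂nonneg u (hα.trans_le (hαγ.le.trans hu.1)))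
      have := (intervalIntegral.integral_add_adjacent_intervals
        (i2 α γ le_rfl hαγ.le) (i2 γ β hαγ.le hαβ.le))
      rw [show F α β s₂ z = ∫ u in α..β, f₂ u from rfl, ← this]
      linarith
    calc (∫ u in α..γ, |g u|) ≤ ∫ u in α..γ, (ε/2) * f₂ u := h1
      _ = (ε/2) * ∫ u in α..γ, f₂ u := intervalIntegral.integral_const_mul _ _
      _ ≤ (ε/2) * F α β s₂ z := mul_le_mul_of_nonneg_left h2 (by linarith)
  -- Bound B on [γ, β]
  have hB : (∫ u in γ..β, |g u|) ≤ (β - γ) * (C * M * Real.exp (-z * γ)) := by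
    have hpt : ∀ u ∈ Set.Icc γ β, |g u| ≤ C * M * Real.exp (-z * γ) := by
      intro u hu
      have huαβ : u ∈ Set.Icc α β := ⟨hαγ.le.trans hu.1, hu.2⟩
      have hu0 : 0 < u := hα.trans_le huαβ.1
      have hr1 : |u ^ (s₁ - s₂) - c| ≤ C := by
        calc |u ^ (s₁ - s₂) - c| ≤ |u ^ (s₁ - s₂)| + |c| := abs_sub _ _
          _ ≤ B₁ + |c| := by
              have := (rpow_bound hα (s₁ - s₂) huαβ).2
              rw [abs_of_nonneg (Real.rpow_nonneg hu0.le _)]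
              linarith
      have hr2 : u ^ (s₂ - 1) ≤ M := (rpow_bound hα (s₂ - 1) huαβ).2
      have hr3 : Real.exp (-z * u) ≤ Real.exp (-z * γ) := by
        have := mul_le_mul_of_nonneg_left hu.1 hz0
        exact Real.exp_le_exp.2 (by linarith)
      rw [hgfact u hu0, abs_mul, abs_of_nonneg (hf₂nonneg u hu0)]
      calc |u ^ (s₁ - s₂) - c| * f₂ u ≤ C * f₂ u :=
            mul_le_mul_of_nonneg_right hr1 (hf₂nonneg u hu0)
        _ ≤ C * (M * Real.exp (-z * γ)) := by
            apply mul_le_mul_of_nonneg_left _ hCpos.le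
            exact mul_le_mul hr2 hr3 (Real.exp_pos _).le hMpos.le
        _ = C * M * Real.exp (-z * γ) := by ring
    calc (∫ u in γ..β, |g u|) ≤ ∫ _u in γ..β, C * M * Real.exp (-z * γ) :=
          intervalIntegral.integral_mono_on hγβ.le (ig γ β hαγ.le hαβ.le).abs
            intervalIntegrable_const hpt
      _ = (β - γ) * (C * M * Real.exp (-z * γ)) := by
          rw [intervalIntegral.integral_const, smul_eq_mul]
  -- lower bound for F₂
  set γ' : ℝ := α + δ/2 with hγ'def
  have hαγ' : α < γ' := by simp only [hγ'def]; linarith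
  have hγ'β : γ' < β := by simp only [hγ'def]; linarith
  have hF₂low : m * (δ/2) * Real.exp (-z * γ') ≤ F α β s₂ z := by
    have hpt : ∀ u ∈ Set.Icc α γ', m * Real.exp (-z * γ') ≤ f₂ u := by
      intro u hu
      have huαβ : u ∈ Set.Icc α β := ⟨hu.1, hu.2.trans hγ'β.le⟩
      have hu0 : 0 < u := hα.trans_le hu.1
      have hr1 : m ≤ u ^ (s₂ - 1) := (rpow_bound hα (s₂ - 1) huαβ).1
      have hr2 : Real.exp (-z * γ') ≤ Real.exp (-z * u) := by
        have := mul_le_mul_of_nonneg_left hu.2 hz0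
        exact Real.exp_le_exp.2 (by linarith)
      exact mul_le_mul hr1 hr2 (Real.exp_pos _).le (Real.rpow_nonneg hu0.le _)
    have h1 : (∫ _u in α..γ', m * Real.exp (-z * γ')) ≤ ∫ u in α..γ', f₂ u :=
      intervalIntegral.integral_mono_on hαγ'.le intervalIntegrable_const
        (i2 α γ' le_rfl hαγ'.le) hpt
    have h2 : (∫ _u in α..γ', m * Real.exp (-z * γ')) = m * (δ/2) * Real.exp (-z * γ') := by
      rw [intervalIntegral.integral_const, smul_eq_mul]
      simp only [hγ'def]; ring
    have htail : 0 ≤ ∫ u in γ'..β, f₂ u :=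
      intervalIntegral.integral_nonneg hγ'β.le
        (fun u hu => hf₂nonneg u (hα.trans_le (hαγ'.le.trans hu.1)))
    have hadd := intervalIntegral.integral_add_adjacent_intervals
      (i2 α γ' le_rfl hαγ'.le) (i2 γ' β hαγ'.le hαβ.le)
    rw [show F α β s₂ z = ∫ u in α..β, f₂ u from rfl, ← hadd]
    linarith
  -- put it together
  have hQb : Q * Real.exp (-(z * (δ/2))) < t := hZ₀ z hzZ₀
  have hexpsplit : Real.exp (-z * γ) = Real.exp (-(z * (δ/2))) * Real.exp (-z * γ') := by
    rw [← Real.exp_add]; congr 1; simp only [hγdef, hγ'def]; ring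
  have hBfinal : (∫ u in γ..β, |g u|) ≤ (ε/2) * F α β s₂ z := by
    have e1 : (β - γ) * (C * M * Real.exp (-z * γ))
        = Q * Real.exp (-(z * (δ/2))) * Real.exp (-z * γ') := by
      rw [hexpsplit, hQ]; ring
    have e2 : Q * Real.exp (-(z * (δ/2))) * Real.exp (-z * γ') ≤ t * Real.exp (-z * γ') :=
      mul_le_mul_of_nonneg_right hQb.le (Real.exp_pos _).le
    have e3 : t * Real.exp (-z * γ') = (ε/2) * (m * (δ/2) * Real.exp (-z * γ')) := by
      rw [ht]; ring
    calc (∫ u in γ..β, |g u|) ≤ (β - γ) * (C * M * Real.exp (-z * γ)) := hB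
      _ = Q * Real.exp (-(z * (δ/2))) * Real.exp (-z * γ') := e1
      _ ≤ t * Real.exp (-z * γ') := e2
      _ = (ε/2) * (m * (δ/2) * Real.exp (-z * γ')) := e3
      _ ≤ (ε/2) * F α β s₂ z := mul_le_mul_of_nonneg_left hF₂low (by linarith)
  calc |F α β s₁ z - c * F α β s₂ z| ≤ ∫ u in α..β, |g u| := habs
    _ = (∫ u in α..γ, |g u|) + ∫ u in γ..β, |g u| := hsplit
    _ ≤ (ε/2) * F α β s₂ z + (ε/2) * F α β s₂ z := add_le_add hA hBfinal
    _ = ε * F α β s₂ z := by ring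

end LRatioAux3

end AuxLemmas

/-- `L_a^b(s,x) := ∫ Φ_a^b(s, |x-x̃|²/2) dμ(x̃)`. -/
noncomputable def Lab (d : ℕ) (μ : Measure (EuclideanSpace ℝ (Fin d)))
    (a b s : ℝ) (x : EuclideanSpace ℝ (Fin d)) : ℝ :=
  ∫ xt, Phi a b s (‖x - xt‖ ^ 2 / 2) ∂μ

open LRatioAux LRatioAux2 LRatioAux3

set_option maxHeartbeats 1000000

/-- For a compactly supported probability measure `μ`, `L_a^b(s₁,x)/L_a^b(s₂,x)`
converges uniformly to `b^{2(s₂-s₁)}` as `|x| → ∞`. -/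
theorem L_ratio_uniform_limit (d : ℕ) (a b s₁ s₂ : ℝ) (ha : 0 < a) (hab : a < b)
    (μ : Measure (EuclideanSpace ℝ (Fin d))) [IsProbabilityMeasure μ]
    (hμ : ∃ K : Set (EuclideanSpace ℝ (Fin d)), IsCompact K ∧ μ Kᶜ = 0) :
    ∀ ε > 0, ∃ R : ℝ, ∀ x : EuclideanSpace ℝ (Fin d), R ≤ ‖x‖ →
      |Lab d μ a b s₁ x / Lab d μ a b s₂ x - b ^ (2 * (s₂ - s₁))| < ε := by
  have hb : 0 < b := ha.trans hab
  have hα : 0 < 1 / b ^ 2 := by positivity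
  have hαβ : 1 / b ^ 2 < 1 / a ^ 2 := by
    apply one_div_lt_one_div_of_lt (by positivity)
    exact pow_lt_pow_left₀ hab ha.le (by norm_num)
  have hPhiF : ∀ s z, Phi a b s z = F (1 / b ^ 2) (1 / a ^ 2) s z := fun _ _ => rfl
  -- identity for the constant
  have hcid : ((1:ℝ) / b ^ 2) ^ (s₁ - s₂) = b ^ (2 * (s₂ - s₁)) := by
    have h1 : ((1:ℝ) / b ^ 2) = b ^ (-2 : ℝ) := by
      rw [Real.rpow_neg hb.le, Real.rpow_two, one_div]
    rw [h1, ← Real.rpow_mul hb.le]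
    congr 1; ring
  obtain ⟨K, hK, hKc⟩ := hμ
  obtain ⟨C0, hC0⟩ := hK.isBounded.exists_norm_le
  set Rk : ℝ := max C0 0 with hRk
  have hRk0 : 0 ≤ Rk := le_max_right _ _
  have hKb : ∀ xt ∈ K, ‖xt‖ ≤ Rk := fun xt hxt => (hC0 xt hxt).trans (le_max_left _ _)
  intro ε hε
  obtain ⟨Z, hZ0, hZ⟩ := F_key hα hαβ s₁ s₂ (half_pos hε)
  refine ⟨Rk + Real.sqrt (2 * Z), ?_⟩
  intro x hx
  set c : ℝ := b ^ (2 * (s₂ - s₁)) with hcdef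
  -- pointwise facts on K
  have hzK : ∀ xt ∈ K, Z ≤ ‖x - xt‖ ^ 2 / 2 := by
    intro xt hxt
    have h1 : Real.sqrt (2 * Z) ≤ ‖x - xt‖ := by
      have := norm_sub_norm_le x xt
      have h2 := hKb xt hxt
      calc Real.sqrt (2 * Z) = (Rk + Real.sqrt (2 * Z)) - Rk := by ring
        _ ≤ ‖x‖ - ‖xt‖ := by linarith
        _ ≤ ‖x - xt‖ := by
            have := norm_sub_norm_le x xt; linarith [abs_le.1 (abs_norm_sub_norm_le x xt)]
    have h2 : 2 * Z ≤ ‖x - xt‖ ^ 2 := by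
      have := Real.sq_sqrt (by linarith : (0:ℝ) ≤ 2 * Z)
      nlinarith [Real.sqrt_nonneg (2 * Z), norm_nonneg (x - xt)]
    linarith
  -- continuity / integrability
  have hzc : Continuous (fun xt : EuclideanSpace ℝ (Fin d) => ‖x - xt‖ ^ 2 / 2) := by
    fun_prop
  have hφcont : ∀ s : ℝ, Continuous (fun xt : EuclideanSpace ℝ (Fin d) =>
      Phi a b s (‖x - xt‖ ^ 2 / 2)) := by
    intro s
    simp only [hPhiF]
    exact (F_cont hα hαβ s).comp hzc
  have hφpos : ∀ (s : ℝ) xt, 0 < Phi a b s (‖x - xt‖ ^ 2 / 2) := by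
    intro s xt; rw [hPhiF]; exact F_pos hα hαβ s _
  have hφle : ∀ (s : ℝ) xt, Phi a b s (‖x - xt‖ ^ 2 / 2) ≤ Phi a b s 0 := by
    intro s xt; rw [hPhiF, hPhiF]; exact F_anti hα hαβ s (by positivity)
  have hφint : ∀ s : ℝ, Integrable (fun xt => Phi a b s (‖x - xt‖ ^ 2 / 2)) μ := by
    intro s
    apply (integrable_const (Phi a b s 0)).mono' (hφcont s).aestronglyMeasurable
    filter_upwards with xt
    rw [Real.norm_eq_abs, abs_of_pos (hφpos s xt)]
    exact hφle s xt
  -- lower bound for Lab s₂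
  set κ : ℝ := Phi a b s₂ ((‖x‖ + Rk) ^ 2 / 2) with hκ
  have hκpos : 0 < κ := by rw [hκ, hPhiF]; exact F_pos hα hαβ s₂ _
  have hL₂pos : κ ≤ Lab d μ a b s₂ x := by
    have hmono : ∀ᵐ xt ∂μ, κ ≤ Phi a b s₂ (‖x - xt‖ ^ 2 / 2) := by
      rw [ae_iff]
      apply measure_mono_null _ hKc
      intro xt hxt
      simp only [Set.mem_setOf_eq, not_le, Pi.sub_apply] at hxt
      simp only [Set.mem_compl_iff]
      intro hxtK
      have h1 : ‖x - xt‖ ≤ ‖x‖ + Rk :=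
        (norm_sub_le x xt).trans (by linarith [hKb xt hxtK])
      have h2 : ‖x - xt‖ ^ 2 / 2 ≤ (‖x‖ + Rk) ^ 2 / 2 := by
        nlinarith [norm_nonneg (x - xt)]
      have : κ ≤ Phi a b s₂ (‖x - xt‖ ^ 2 / 2) := by
        rw [hκ, hPhiF, hPhiF]; exact F_anti hα hαβ s₂ h2
      linarith
    calc κ = ∫ _xt, κ ∂μ := by rw [MeasureTheory.integral_const]; simp
      _ ≤ Lab d μ a b s₂ x := integral_mono_ae (integrable_const κ) (hφint s₂) hmono
  have hL₂pos' : 0 < Lab d μ a b s₂ x := hκpos.trans_le hL₂pos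
  -- main bound
  have hmain : |Lab d μ a b s₁ x - c * Lab d μ a b s₂ x| ≤ (ε / 2) * Lab d μ a b s₂ x := by
    have hsub : Lab d μ a b s₁ x - c * Lab d μ a b s₂ x
        = ∫ xt, (Phi a b s₁ (‖x - xt‖ ^ 2 / 2) - c * Phi a b s₂ (‖x - xt‖ ^ 2 / 2)) ∂μ := by
      rw [integral_sub (hφint s₁) ((hφint s₂).const_mul c), integral_const_mul]
      rfl
    rw [hsub]
    have h1 : |∫ xt, (Phi a b s₁ (‖x - xt‖ ^ 2 / 2) - c * Phi a b s₂ (‖x - xt‖ ^ 2 / 2)) ∂μ|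
        ≤ ∫ xt, |Phi a b s₁ (‖x - xt‖ ^ 2 / 2) - c * Phi a b s₂ (‖x - xt‖ ^ 2 / 2)| ∂μ := by
      simpa only [Real.norm_eq_abs] using norm_integral_le_integral_norm
        (μ := μ) (fun xt => Phi a b s₁ (‖x - xt‖ ^ 2 / 2) - c * Phi a b s₂ (‖x - xt‖ ^ 2 / 2))
    have h2 : (∫ xt, |Phi a b s₁ (‖x - xt‖ ^ 2 / 2) - c * Phi a b s₂ (‖x - xt‖ ^ 2 / 2)| ∂μ)
        ≤ ∫ xt, (ε / 2) * Phi a b s₂ (‖x - xt‖ ^ 2 / 2) ∂μ := by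
      apply integral_mono_ae ((hφint s₁).sub ((hφint s₂).const_mul c)).abs
        ((hφint s₂).const_mul (ε / 2))
      rw [Filter.EventuallyLE, ae_iff]
      apply measure_mono_null _ hKc
      intro xt hxt
      simp only [Set.mem_setOf_eq, not_le, Pi.sub_apply] at hxt
      simp only [Set.mem_compl_iff]
      intro hxtK
      have := hZ (‖x - xt‖ ^ 2 / 2) (hzK xt hxtK)
      rw [hPhiF s₁, hPhiF s₂] at hxt
      rw [← hcid] at hxt
      linarith
    calc _ ≤ _ := h1
      _ ≤ ∫ xt, (ε / 2) * Phi a b s₂ (‖x - xt‖ ^ 2 / 2) ∂μ := h2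
      _ = (ε / 2) * Lab d μ a b s₂ x := integral_const_mul _ _
  -- conclude
  have heq : Lab d μ a b s₁ x / Lab d μ a b s₂ x - c
      = (Lab d μ a b s₁ x - c * Lab d μ a b s₂ x) / Lab d μ a b s₂ x := by
    field_simp
  rw [heq, abs_div, abs_of_pos hL₂pos']
  rw [div_lt_iff₀ hL₂pos']
  calc |Lab d μ a b s₁ x - c * Lab d μ a b s₂ x| ≤ (ε / 2) * Lab d μ a b s₂ x := hmain
    _ < ε * Lab d μ a b s₂ x := by
        apply mul_lt_mul_of_pos_right _ hL₂pos'
        linarith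
end

section
/- Assume 0 < σ_ε < σ_T < ∞, α ∈ ℝ, μ_data compactly supported, and e ≡ 0. Then every solution of dx/dt = s_*(x) converges as t → ∞ to the set E = { x ∈ ℝ^d : ∇_x L_{σ_ε}^{σ_T}((d+α)/2 − 1, x) = 0 } of critical points of L. -/
open MeasureTheory Real Filter

section PhiLemmas
variable {a b s z : ℝ} (ha : 0 < a) (hab : a < b)

lemma c1_pos (hb : 0 < b) : (0:ℝ) < 1 / b ^ 2 := by positivity

lemma c1_lt_c2 (ha : 0 < a) (hab : a < b) : 1 / b ^ 2 < 1 / a ^ 2 := by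
  have hb : 0 < b := ha.trans hab
  have hb : 0 < b := ha.trans hab
  rw [div_lt_div_iff₀ (by positivity) (by positivity)]
  nlinarith

/-- integrand continuity on positive interval -/
lemma phi_integrand_contOn (s z : ℝ) {lo hi : ℝ} (hlo : 0 < lo) (hhi : 0 < hi) :
    ContinuousOn (fun u : ℝ => u ^ (s - 1) * Real.exp (-z * u)) (Set.uIcc lo hi) := by
  intro u hu
  have hu0 : 0 < u := lt_of_lt_of_le (lt_min hlo hhi) hu.1
  exact ((Real.continuousAt_rpow_const u (s-1) (Or.inl hu0.ne')).mul
    (Continuous.continuousAt (by continuity))).continuousWithinAt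

lemma phi_intervalIntegrable (ha : 0 < a) (hab : a < b) (s z : ℝ) :
    IntervalIntegrable (fun u : ℝ => u ^ (s - 1) * Real.exp (-z * u)) volume
      (1 / b ^ 2) (1 / a ^ 2) := by
  have hb : 0 < b := ha.trans hab
  exact (phi_integrand_contOn s z (c1_pos hb) (by positivity)).intervalIntegrable

lemma phi_pos (ha : 0 < a) (hab : a < b) (s z : ℝ) : 0 < Phi a b s z := by
  have hb : 0 < b := ha.trans hab
  apply intervalIntegral.intervalIntegral_pos_of_pos_on (phi_intervalIntegrable ha hab s z)
    _ (c1_lt_c2 ha hab)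
  intro u hu
  have hu0 : 0 < u := lt_trans (c1_pos hb) hu.1
  positivity

end PhiLemmas


lemma mem_uIoc_pos {lo hi u : ℝ} (hlo : 0 < lo) (hhi : 0 < hi) (hu : u ∈ Set.uIoc lo hi) :
    0 < u := by
  rcases Set.mem_uIoc.1 hu with h | h
  · exact hlo.trans h.1
  · exact hhi.trans h.1

section PhiDeriv
variable {a b : ℝ}

lemma phi_hasDerivAt (ha : 0 < a) (hab : a < b) (s z : ℝ) :
    HasDerivAt (fun w => Phi a b s w) (-(Phi a b (s + 1) z)) z := by
  have hb : 0 < b := ha.trans hab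
  have hc1 : (0:ℝ) < 1 / b ^ 2 := by positivity
  have key := intervalIntegral.hasDerivAt_integral_of_dominated_loc_of_deriv_le
    (F := fun (w : ℝ) (u : ℝ) => u ^ (s - 1) * Real.exp (-w * u))
    (F' := fun (w : ℝ) (u : ℝ) => -(u ^ s * Real.exp (-w * u)))
    (μ := volume) (a := 1 / b ^ 2) (b := 1 / a ^ 2) (x₀ := z)
    (bound := fun u => u ^ s * Real.exp ((|z| + 1) * u)) (s := Metric.ball z 1) (Metric.ball_mem_nhds z one_pos)
    ?meas ?int ?meas' ?bound ?bint ?diff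
  · refine key.2.congr_deriv ?_
    rw [Phi, ← intervalIntegral.integral_neg]
    congr 1
    ext u
    rw [show s + 1 - 1 = s from by ring]
  case meas =>
    filter_upwards with w
    exact ((phi_integrand_contOn s w hc1 (by positivity)).mono
      Set.uIoc_subset_uIcc).aestronglyMeasurable measurableSet_uIoc
  case int => exact phi_intervalIntegrable ha hab s z
  case meas' =>
    have : ContinuousOn (fun u : ℝ => -(u ^ s * Real.exp (-z * u)))
        (Set.uIcc (1 / b^2) (1 / a^2)) :=
      (phi_integrand_contOn (s+1) z hc1 (by positivity)).neg.congr (by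
        intro u hu; simp only [Pi.neg_apply]; ring_nf)
    exact (this.mono Set.uIoc_subset_uIcc).aestronglyMeasurable measurableSet_uIoc
  case bound =>
    filter_upwards with u hu w hw
    have hu0 : 0 < u := mem_uIoc_pos hc1 (by positivity) hu
    rw [norm_neg, norm_mul, Real.norm_eq_abs, Real.norm_eq_abs,
      abs_of_pos (Real.rpow_pos_of_pos hu0 s), Real.abs_exp]
    apply mul_le_mul_of_nonneg_left _ (Real.rpow_pos_of_pos hu0 s).le
    apply Real.exp_le_exp.2
    have : |w| ≤ |z| + 1 := by
      have := Metric.mem_ball.1 hw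
      rw [Real.dist_eq] at this
      have := abs_sub_abs_le_abs_sub w z
      linarith
    nlinarith [abs_nonneg w, neg_abs_le w, hu0.le, (neg_abs_le w)]
  case bint =>
    apply ContinuousOn.intervalIntegrable
    apply (phi_integrand_contOn (s+1) (-(|z|+1)) hc1 (by positivity)).congr
    intro u hu
    rw [show s + 1 - 1 = s by ring, neg_neg]
  case diff =>
    filter_upwards with u hu w hw
    have hu0 : 0 < u := mem_uIoc_pos hc1 (by positivity) hu
    have h1 : HasDerivAt (fun w : ℝ => Real.exp (-w * u)) (Real.exp (-w*u) * (-u)) w := by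
      have : HasDerivAt (fun w : ℝ => -w * u) (-u) w := by
        simpa using (hasDerivAt_id w).neg.mul_const u
      exact this.exp
    have := h1.const_mul (u ^ (s-1))
    refine this.congr_deriv ?_
    rw [show u ^ s = u ^ (s - 1) * u by
      rw [← Real.rpow_add_one hu0.ne' (s-1)]; ring_nf]
    ring

lemma phi_continuous (ha : 0 < a) (hab : a < b) (s : ℝ) : Continuous (Phi a b s) :=
  continuous_iff_continuousAt.2 fun z => (phi_hasDerivAt ha hab s z).continuousAt

lemma phi_le_exp_mul (ha : 0 < a) (hab : a < b) (s : ℝ) {z : ℝ} (hz : 0 ≤ z) :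
    Phi a b s z ≤ Real.exp (-(1 / b ^ 2) * z) * Phi a b s 0 := by
  have hb : 0 < b := ha.trans hab
  have hc1 : (0:ℝ) < 1 / b ^ 2 := by positivity
  have hle : 1 / b ^ 2 ≤ 1 / a ^ 2 := (c1_lt_c2 ha hab).le
  rw [show Real.exp (-(1 / b ^ 2) * z) * Phi a b s 0
      = ∫ u in (1 / b^2)..(1 / a^2), Real.exp (-(1 / b ^ 2) * z) * (u ^ (s-1) * Real.exp (-0 * u))
      from by rw [Phi, ← intervalIntegral.integral_const_mul]]
  apply intervalIntegral.integral_mono_on hle (phi_intervalIntegrable ha hab s z)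
  · exact ((phi_integrand_contOn s 0 hc1 (by positivity)).const_smul
      (Real.exp (-(1 / b ^ 2) * z))).intervalIntegrable
  · intro u hu
    have hu0 : 0 < u := hc1.trans_le hu.1
    simp only [neg_zero, zero_mul, Real.exp_zero, mul_one]
    rw [mul_comm (Real.exp _) _]
    exact mul_le_mul_of_nonneg_left (Real.exp_le_exp.2 (by nlinarith [hu.1, hz]))
      (Real.rpow_pos_of_pos hu0 (s-1)).le


lemma phi_le_zero (ha : 0 < a) (hab : a < b) (s : ℝ) {z : ℝ} (hz : 0 ≤ z) :
    Phi a b s z ≤ Phi a b s 0 := by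
  have h := phi_le_exp_mul ha hab s hz
  have hb : 0 < b := ha.trans hab
  have : Real.exp (-(1 / b ^ 2) * z) ≤ 1 := by
    rw [Real.exp_le_one_iff]
    have : (0:ℝ) < 1 / b ^ 2 := by positivity
    nlinarith
  nlinarith [phi_pos ha hab s (0:ℝ), h]

lemma phi_antitone_arg (ha : 0 < a) (hab : a < b) (s : ℝ) {z w : ℝ} (hzw : z ≤ w) :
    Phi a b s w ≤ Phi a b s z := by
  have hb : 0 < b := ha.trans hab
  have hc1 : (0:ℝ) < 1 / b ^ 2 := by positivity
  apply intervalIntegral.integral_mono_on (c1_lt_c2 ha hab).le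
    (phi_intervalIntegrable ha hab s w) (phi_intervalIntegrable ha hab s z)
  intro u hu
  have hu0 : 0 < u := hc1.trans_le hu.1
  exact mul_le_mul_of_nonneg_left (Real.exp_le_exp.2 (by nlinarith [hu.1, hzw]))
    (Real.rpow_pos_of_pos hu0 (s-1)).le

/-- The optimal model `s_*`. -/
noncomputable def sStar (d : ℕ) (μ : Measure (EuclideanSpace ℝ (Fin d)))
    (σε σT α : ℝ) (x : EuclideanSpace ℝ (Fin d)) : EuclideanSpace ℝ (Fin d) :=
  (∫ xt, Phi σε σT (((d : ℝ) + 2 * α - 2) / 2) (‖x - xt‖ ^ 2 / 2) ∂μ)⁻¹ •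
    ∫ xt, Phi σε σT (((d : ℝ) + α) / 2) (‖x - xt‖ ^ 2 / 2) • (xt - x) ∂μ



section Meas
variable {d : ℕ} {a b : ℝ}
local notation "E" => EuclideanSpace ℝ (Fin d)
variable {μ : Measure (EuclideanSpace ℝ (Fin d))} [IsProbabilityMeasure μ]

/-- scalar integrand integrable. -/
lemma lab_integrand_integrable (ha : 0 < a) (hab : a < b) (s : ℝ) (x : E) :
    Integrable (fun xt : E => Phi a b s (‖x - xt‖ ^ 2 / 2)) μ := by
  have hcont : Continuous fun xt : E => Phi a b s (‖x - xt‖ ^ 2 / 2) :=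
    (phi_continuous ha hab s).comp (by fun_prop)
  refine (integrable_const (Phi a b s 0)).mono' hcont.aestronglyMeasurable ?_
  filter_upwards with xt
  rw [Real.norm_eq_abs, abs_of_pos (phi_pos ha hab s _)]
  exact phi_le_zero ha hab s (by positivity)

lemma lab_pos (ha : 0 < a) (hab : a < b) (s : ℝ) (x : E) : 0 < Lab d μ a b s x := by
  rw [Lab, MeasureTheory.integral_pos_iff_support_of_nonneg_ae
    (Filter.Eventually.of_forall fun xt => (phi_pos ha hab s _).le)
    (lab_integrand_integrable ha hab s x)]
  have : (Function.support fun xt : E => Phi a b s (‖x - xt‖ ^ 2 / 2)) = Set.univ := by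
    ext xt; simp [Function.mem_support, (phi_pos ha hab s _).ne']
  simp [this]

lemma lab_le (ha : 0 < a) (hab : a < b) (s : ℝ) (x : E) : Lab d μ a b s x ≤ Phi a b s 0 := by
  rw [Lab]
  calc ∫ xt, Phi a b s (‖x - xt‖ ^ 2 / 2) ∂μ ≤ ∫ _, Phi a b s 0 ∂μ := by
        apply integral_mono (lab_integrand_integrable ha hab s x) (integrable_const _)
        intro xt
        exact phi_le_zero ha hab s (by positivity)
    _ = Phi a b s 0 := by simp

open InnerProductSpace in
set_option maxHeartbeats 1000000 in
lemma hasGradientAt_lab (ha : 0 < a) (hab : a < b) {K : Set (EuclideanSpace ℝ (Fin d))}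
    (hK : IsCompact K) (hμK : μ Kᶜ = 0) (s : ℝ) (x : E) :
    HasGradientAt (Lab d μ a b s)
      (∫ xt, Phi a b (s + 1) (‖x - xt‖ ^ 2 / 2) • (xt - x) ∂μ) x := by
  obtain ⟨R, hR⟩ := hK.isBounded.exists_norm_le
  have haeK : ∀ᵐ xt ∂μ, xt ∈ K := by
    rw [MeasureTheory.ae_iff]
    exact hμK
  set L : E →L[ℝ] (E →L[ℝ] ℝ) :=
    (toDual ℝ E).toContinuousLinearEquiv.toContinuousLinearMap with hL
  have hLnorm : ∀ v : E, ‖L v‖ = ‖v‖ := fun v => (toDual ℝ E).norm_map v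
  have hdiff : ∀ (xt : E), ∀ w : E,
      HasFDerivAt (fun y : E => Phi a b s (‖y - xt‖ ^ 2 / 2))
        (L (Phi a b (s + 1) (‖w - xt‖ ^ 2 / 2) • (xt - w))) w := by
    intro xt w
    have h1 : HasFDerivAt (fun y : E => y - xt) (ContinuousLinearMap.id ℝ E) w :=
      (hasFDerivAt_id w).sub_const xt
    have h2 := h1.norm_sq
    have h3 := h2.const_smul (𝕜 := ℝ) (R := ℝ) ((2:ℝ)⁻¹)
    have heq : (fun y : E => (2:ℝ)⁻¹ • ‖y - xt‖ ^ 2) = fun y : E => ‖y - xt‖ ^ 2 / 2 := by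
      funext y
      simp [smul_eq_mul]
      ring
    rw [show ((2:ℝ)⁻¹ • fun y : E => ‖y - xt‖ ^ 2) = fun y : E => ‖y - xt‖ ^ 2 / 2 from by rw [← heq]; rfl] at h3
    have h4 := (phi_hasDerivAt ha hab s (‖w - xt‖ ^ 2 / 2)).comp_hasFDerivAt w h3
    refine h4.congr_fderiv ?_
    apply ContinuousLinearMap.ext
    intro v
    simp only [hL, ContinuousLinearMap.smul_apply, ContinuousLinearMap.coe_smul',
      Pi.smul_apply, ContinuousLinearMap.coe_comp', Function.comp_apply,
      ContinuousLinearMap.coe_id', id_eq, innerSL_apply_apply, smul_eq_mul,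
      ContinuousLinearEquiv.coe_coe, LinearIsometryEquiv.coe_toContinuousLinearEquiv,
      toDual_apply_apply]
    rw [real_inner_smul_left, inner_sub_left]
    simp only [inner_sub_left]
    ring
  have hGmeas : ∀ w : E, AEStronglyMeasurable
      (fun xt : E => Phi a b (s + 1) (‖w - xt‖ ^ 2 / 2) • (xt - w)) μ := by
    intro w
    exact (Continuous.smul ((phi_continuous ha hab (s+1)).comp (by fun_prop))
      (by fun_prop)).aestronglyMeasurable
  have hGbound : ∀ w : E, ∀ xt ∈ K, ‖Phi a b (s + 1) (‖w - xt‖ ^ 2 / 2) • (xt - w)‖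
      ≤ Phi a b (s+1) 0 * (R + ‖w‖) := by
    intro w xt hxt
    rw [norm_smul, Real.norm_eq_abs, abs_of_pos (phi_pos ha hab _ _)]
    have h5 : ‖xt - w‖ ≤ R + ‖w‖ := by
      calc ‖xt - w‖ ≤ ‖xt‖ + ‖w‖ := norm_sub_le _ _
        _ ≤ R + ‖w‖ := by have := hR xt hxt; linarith
    exact mul_le_mul (phi_le_zero ha hab _ (by positivity)) h5 (norm_nonneg _)
      (phi_pos ha hab _ _).le
  have hGint : Integrable (fun xt : E => Phi a b (s + 1) (‖x - xt‖ ^ 2 / 2) • (xt - x)) μ := by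
    refine (integrable_const (Phi a b (s+1) 0 * (R + ‖x‖))).mono' (hGmeas x) ?_
    filter_upwards [haeK] with xt hxt
    exact hGbound x xt hxt
  have key := hasFDerivAt_integral_of_dominated_of_fderiv_le
    (F := fun (w : E) (xt : E) => Phi a b s (‖w - xt‖ ^ 2 / 2))
    (F' := fun (w : E) (xt : E) => L (Phi a b (s + 1) (‖w - xt‖ ^ 2 / 2) • (xt - w)))
    (μ := μ) (x₀ := x) (bound := fun _ => Phi a b (s+1) 0 * (R + (‖x‖ + 1)))
    (s := Metric.ball x 1) (Metric.ball_mem_nhds x one_pos) ?_ ?_ ?_ ?_ ?_ ?_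
  · rw [hasGradientAt_iff_hasFDerivAt]
    have hswap : (∫ xt, L (Phi a b (s + 1) (‖x - xt‖ ^ 2 / 2) • (xt - x)) ∂μ)
        = L (∫ xt, Phi a b (s + 1) (‖x - xt‖ ^ 2 / 2) • (xt - x) ∂μ) :=
      L.integral_comp_comm hGint
    rw [hswap] at key
    exact key
  · filter_upwards with w
    exact (Continuous.aestronglyMeasurable
      ((phi_continuous ha hab s).comp (by fun_prop)))
  · exact lab_integrand_integrable ha hab s x
  · exact (ContinuousLinearMap.continuous L).comp_aestronglyMeasurable (hGmeas x)
  · filter_upwards [haeK] with xt hxt w hw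
    rw [hLnorm]
    refine (hGbound w xt hxt).trans ?_
    have : ‖w‖ ≤ ‖x‖ + 1 := by
      have := Metric.mem_ball.1 hw
      rw [dist_eq_norm] at this
      have h6 := norm_sub_norm_le w x
      linarith
    have hp := (phi_pos ha hab (s+1) (0:ℝ)).le
    nlinarith [norm_nonneg w, norm_nonneg x]
  · exact integrable_const _
  · filter_upwards with xt w hw
    exact hdiff xt w


lemma grad_integrand_integrable (ha : 0 < a) (hab : a < b)
    {K : Set (EuclideanSpace ℝ (Fin d))} (hK : IsCompact K) (hμK : μ Kᶜ = 0) (s : ℝ) (x : E) :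
    Integrable (fun xt : E => Phi a b s (‖x - xt‖ ^ 2 / 2) • (xt - x)) μ := by
  obtain ⟨R, hR⟩ := hK.isBounded.exists_norm_le
  have haeK : ∀ᵐ xt ∂μ, xt ∈ K := by
    rw [MeasureTheory.ae_iff]; exact hμK
  refine (integrable_const (Phi a b s 0 * (R + ‖x‖))).mono'
    ((Continuous.smul ((phi_continuous ha hab s).comp (by fun_prop))
      (by fun_prop)).aestronglyMeasurable) ?_
  filter_upwards [haeK] with xt hxt
  rw [norm_smul, Real.norm_eq_abs, abs_of_pos (phi_pos ha hab _ _)]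
  have h5 : ‖xt - x‖ ≤ R + ‖x‖ := by
    calc ‖xt - x‖ ≤ ‖xt‖ + ‖x‖ := norm_sub_le _ _
      _ ≤ R + ‖x‖ := by have := hR xt hxt; linarith
  exact mul_le_mul (phi_le_zero ha hab _ (by positivity)) h5 (norm_nonneg _)
    (phi_pos ha hab _ _).le

lemma continuous_vecint (ha : 0 < a) (hab : a < b)
    {K : Set (EuclideanSpace ℝ (Fin d))} (hK : IsCompact K) (hμK : μ Kᶜ = 0) (s : ℝ) :
    Continuous fun w : E => ∫ xt, Phi a b s (‖w - xt‖ ^ 2 / 2) • (xt - w) ∂μ := by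
  obtain ⟨R, hR⟩ := hK.isBounded.exists_norm_le
  have haeK : ∀ᵐ xt ∂μ, xt ∈ K := by
    rw [MeasureTheory.ae_iff]; exact hμK
  rw [continuous_iff_continuousAt]
  intro w₀
  apply MeasureTheory.continuousAt_of_dominated
    (bound := fun _ => Phi a b s 0 * (R + (‖w₀‖ + 1)))
  · filter_upwards with w
    exact (Continuous.smul ((phi_continuous ha hab s).comp (by fun_prop))
      (by fun_prop)).aestronglyMeasurable
  · filter_upwards [Metric.ball_mem_nhds w₀ one_pos] with w hw
    filter_upwards [haeK] with xt hxt
    rw [norm_smul, Real.norm_eq_abs, abs_of_pos (phi_pos ha hab _ _)]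
    have hw1 : ‖w‖ ≤ ‖w₀‖ + 1 := by
      have := Metric.mem_ball.1 hw
      rw [dist_eq_norm] at this
      have := norm_sub_norm_le w w₀
      linarith
    have h5 : ‖xt - w‖ ≤ R + (‖w₀‖ + 1) := by
      calc ‖xt - w‖ ≤ ‖xt‖ + ‖w‖ := norm_sub_le _ _
        _ ≤ R + (‖w₀‖ + 1) := by have := hR xt hxt; linarith
    exact mul_le_mul (phi_le_zero ha hab _ (by positivity)) h5 (norm_nonneg _)
      (phi_pos ha hab _ _).le
  · exact integrable_const _
  · filter_upwards with xt
    refine ContinuousAt.smul (f := fun w : E => Phi a b s (‖w - xt‖ ^ 2 / 2)) (g := fun w : E => xt - w) ?_ ?_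
    · exact ((phi_continuous ha hab s).comp (by fun_prop)).continuousAt
    · exact (by fun_prop : Continuous fun w : E => xt - w).continuousAt

lemma continuous_lab (ha : 0 < a) (hab : a < b)
    {K : Set (EuclideanSpace ℝ (Fin d))} (hK : IsCompact K) (hμK : μ Kᶜ = 0) (s : ℝ) :
    Continuous (Lab d μ a b s) :=
  continuous_iff_continuousAt.2 fun x =>
    (hasGradientAt_iff_hasFDerivAt.1 (hasGradientAt_lab ha hab hK hμK s x)).continuousAt


lemma lab_decay (ha : 0 < a) (hab : a < b)
    {K : Set (EuclideanSpace ℝ (Fin d))} (hμK : μ Kᶜ = 0) {R : ℝ}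
    (hR : ∀ w ∈ K, ‖w‖ ≤ R) (s : ℝ) (x : E) (hx : R ≤ ‖x‖) :
    Lab d μ a b s x
      ≤ Real.exp (-(1 / b ^ 2) * ((‖x‖ - R) ^ 2 / 2)) * Phi a b s 0 := by
  have haeK : ∀ᵐ xt ∂μ, xt ∈ K := by
    rw [MeasureTheory.ae_iff]; exact hμK
  have hbd : ∀ᵐ xt ∂μ, Phi a b s (‖x - xt‖ ^ 2 / 2)
      ≤ Real.exp (-(1 / b ^ 2) * ((‖x‖ - R) ^ 2 / 2)) * Phi a b s 0 := by
    filter_upwards [haeK] with xt hxt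
    have h1 : ‖x‖ - R ≤ ‖x - xt‖ := by
      have := norm_sub_norm_le x xt
      have := hR xt hxt
      linarith
    have h2 : (‖x‖ - R) ^ 2 / 2 ≤ ‖x - xt‖ ^ 2 / 2 := by
      have h0 : 0 ≤ ‖x‖ - R := by linarith
      nlinarith
    calc Phi a b s (‖x - xt‖ ^ 2 / 2) ≤ Phi a b s ((‖x‖ - R) ^ 2 / 2) :=
          phi_antitone_arg ha hab s h2
      _ ≤ Real.exp (-(1 / b ^ 2) * ((‖x‖ - R) ^ 2 / 2)) * Phi a b s 0 :=
          phi_le_exp_mul ha hab s (by positivity)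
  calc Lab d μ a b s x
      ≤ ∫ _, Real.exp (-(1 / b ^ 2) * ((‖x‖ - R) ^ 2 / 2)) * Phi a b s 0 ∂μ :=
        integral_mono_ae (lab_integrand_integrable ha hab s x) (integrable_const _) hbd
    _ = _ := by simp

lemma lab_superlevel_bounded (ha : 0 < a) (hab : a < b)
    {K : Set (EuclideanSpace ℝ (Fin d))} (hK : IsCompact K) (hμK : μ Kᶜ = 0)
    (s : ℝ) {v₀ : ℝ} (hv₀ : 0 < v₀) :
    ∃ ρ : ℝ, ∀ x : E, v₀ ≤ Lab d μ a b s x → ‖x‖ ≤ ρ := by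
  obtain ⟨R, hR⟩ := hK.isBounded.exists_norm_le
  have hb : 0 < b := ha.trans hab
  have hc1 : (0:ℝ) < 1 / b ^ 2 := by positivity
  have htend : Tendsto (fun r : ℝ =>
      Real.exp (-(1 / b ^ 2) * ((r - R) ^ 2 / 2)) * Phi a b s 0) atTop (nhds 0) := by
    have hexp : Tendsto (fun r : ℝ =>
        Real.exp (-(1 / b ^ 2) * ((r - R) ^ 2 / 2))) atTop (nhds 0) := by
      apply Real.tendsto_exp_atBot.comp
      have h1 : Tendsto (fun r : ℝ => (r - R) ^ 2 / 2) atTop atTop := by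
        apply Tendsto.atTop_div_const (by norm_num)
        exact (tendsto_pow_atTop (by norm_num)).comp
          (tendsto_atTop_add_const_right _ (-R) tendsto_id)
      rw [show (fun r : ℝ => -(1 / b ^ 2) * ((r - R) ^ 2 / 2))
          = (fun y : ℝ => -(1 / b ^ 2) * y) ∘ (fun r : ℝ => (r - R) ^ 2 / 2) from rfl]
      apply Tendsto.comp _ h1
      exact tendsto_id.const_mul_atTop_of_neg (by linarith)
    simpa using hexp.mul_const (Phi a b s 0)
  have hev := htend.eventually (gt_mem_nhds hv₀)
  obtain ⟨ρ₀, hρ₀⟩ := (Filter.eventually_atTop).1 hev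
  refine ⟨max ρ₀ R, fun x hx => ?_⟩
  by_contra hcon
  push_neg at hcon
  have hxR : R ≤ ‖x‖ := le_of_lt (lt_of_le_of_lt (le_max_right _ _) hcon)
  have := lab_decay ha hab hμK hR s x hxR
  have h3 := hρ₀ ‖x‖ (le_of_lt (lt_of_le_of_lt (le_max_left _ _) hcon))
  linarith


end Meas

open InnerProductSpace in
/-- LaSalle-type convergence: when `e ≡ 0`, every solution of `dx/dt = s_*(x)` converges
as `t → ∞` to the critical set `E = {x : ∇ L_{σε}^{σT}((d+α)/2-1, x) = 0}`. -/
theorem lasalle_convergence (d : ℕ) (σε σT α : ℝ) (hσε : 0 < σε) (hσ : σε < σT)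
    (μ : Measure (EuclideanSpace ℝ (Fin d))) [IsProbabilityMeasure μ]
    (hμ : ∃ K : Set (EuclideanSpace ℝ (Fin d)), IsCompact K ∧ μ Kᶜ = 0)
    (x : ℝ → EuclideanSpace ℝ (Fin d))
    (hx : ∀ t : ℝ, HasDerivAt x (sStar d μ σε σT α (x t)) t) :
    Tendsto (fun t : ℝ => Metric.infDist (x t)
        {y : EuclideanSpace ℝ (Fin d) |
          gradient (Lab d μ σε σT (((d : ℝ) + α) / 2 - 1)) y = 0})
      atTop (nhds 0) := by
  obtain ⟨K, hK, hμK⟩ := hμ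
  set s₀ : ℝ := ((d : ℝ) + α) / 2 - 1 with hs₀
  set V : EuclideanSpace ℝ (Fin d) → ℝ := Lab d μ σε σT s₀ with hV
  set N : EuclideanSpace ℝ (Fin d) → EuclideanSpace ℝ (Fin d) :=
    fun w => ∫ xt, Phi σε σT (s₀ + 1) (‖w - xt‖ ^ 2 / 2) • (xt - w) ∂μ with hN
  set Lt : EuclideanSpace ℝ (Fin d) → ℝ :=
    Lab d μ σε σT (((d : ℝ) + 2 * α - 2) / 2) with hLt
  set Eset : Set (EuclideanSpace ℝ (Fin d)) := {y | gradient V y = 0} with hEset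
  -- basic facts
  have hgrad : ∀ w, HasGradientAt V (N w) w :=
    fun w => hasGradientAt_lab hσε hσ hK hμK s₀ w
  have hgradV : ∀ w, gradient V w = N w := fun w => (hgrad w).gradient
  have hexp : ((d : ℝ) + α) / 2 = s₀ + 1 := by rw [hs₀]; ring
  have hsStar : ∀ w, sStar d μ σε σT α w = (Lt w)⁻¹ • N w := by
    intro w
    rw [sStar, hexp]
    rfl
  have hLt_pos : ∀ w, 0 < Lt w := fun w => lab_pos hσε hσ _ w
  have hV_pos : ∀ w, 0 < V w := fun w => lab_pos hσε hσ _ w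
  have hV_le : ∀ w, V w ≤ Phi σε σT s₀ 0 := fun w => lab_le hσε hσ _ w
  -- chain rule
  set g : EuclideanSpace ℝ (Fin d) → ℝ := fun w => (Lt w)⁻¹ * ‖N w‖ ^ 2 with hg
  have hG : ∀ t, HasDerivAt (fun u => V (x u)) (g (x t)) t := by
    intro t
    have h1 := (hasGradientAt_iff_hasFDerivAt.1 (hgrad (x t))).comp_hasDerivAt t (hx t)
    refine h1.congr_deriv ?_
    rw [hsStar, toDual_apply_apply, real_inner_smul_right, real_inner_self_eq_norm_sq]
  have hg_nonneg : ∀ w, 0 ≤ g w := by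
    intro w
    have := (hLt_pos w).le
    positivity
  have hymono : Monotone fun u => V (x u) := by
    apply monotone_of_deriv_nonneg
    · exact fun t => (hG t).differentiableAt
    · intro t
      rw [(hG t).deriv]
      exact hg_nonneg (x t)
  -- continuity
  have hNcont : Continuous N := continuous_vecint hσε hσ hK hμK (s₀ + 1)
  have hLtcont : Continuous Lt := continuous_lab hσε hσ hK hμK _
  have hVcont : Continuous V := continuous_lab hσε hσ hK hμK _
  have hgcont : Continuous g :=
    (hLtcont.inv₀ fun w => (hLt_pos w).ne').mul (hNcont.norm.pow 2)
  have hsScont : Continuous (sStar d μ σε σT α) := by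
    have : (sStar d μ σε σT α) = fun w => (Lt w)⁻¹ • N w := funext hsStar
    rw [this]
    exact (hLtcont.inv₀ fun w => (hLt_pos w).ne').smul hNcont
  -- compact superlevel set
  set S : Set (EuclideanSpace ℝ (Fin d)) := {w | V (x 0) ≤ V w} with hS
  obtain ⟨ρ, hρ⟩ := lab_superlevel_bounded (μ := μ) hσε hσ hK hμK s₀ (hV_pos (x 0))
  have hScomp : IsCompact S := by
    apply (isCompact_closedBall (0 : EuclideanSpace ℝ (Fin d)) ρ).of_isClosed_subset
      (isClosed_le continuous_const hVcont)
    intro w hw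
    rw [Metric.mem_closedBall, dist_zero_right]
    exact hρ w hw
  have hxS : ∀ t, 0 ≤ t → x t ∈ S := fun t ht => hymono ht
  have hx0S : x 0 ∈ S := hxS 0 le_rfl
  -- speed bound
  obtain ⟨z₀, hz₀S, hz₀'⟩ := hScomp.exists_isMaxOn ⟨x 0, hx0S⟩
    (continuous_norm.comp hsScont).continuousOn
  have hz₀ : ∀ w ∈ S, ‖sStar d μ σε σT α w‖ ≤ ‖sStar d μ σε σT α z₀‖ :=
    fun w hw => hz₀' hw
  set M : ℝ := max ‖sStar d μ σε σT α z₀‖ 1 with hM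
  have hM1 : (0:ℝ) < M := lt_of_lt_of_le one_pos (le_max_right _ _)
  have hMb : ∀ w ∈ S, ‖sStar d μ σε σT α w‖ ≤ M :=
    fun w hw => le_trans (hz₀ w hw) (le_max_left _ _)
  -- the main contradiction argument
  by_contra hcon
  rw [Metric.tendsto_atTop] at hcon
  push_neg at hcon
  obtain ⟨ε, hε, hfreq⟩ := hcon
  have hfreq' : ∀ T : ℝ, ∃ t, T ≤ t ∧ 0 ≤ t ∧ ε ≤ Metric.infDist (x t) Eset := by
    intro T
    obtain ⟨t, ht1, ht2⟩ := hfreq (max T 0)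
    refine ⟨t, le_trans (le_max_left _ _) ht1, le_trans (le_max_right _ _) ht1, ?_⟩
    rwa [Real.dist_0_eq_abs, abs_of_nonneg Metric.infDist_nonneg] at ht2
  set τ : ℝ := ε / (2 * M) with hτ
  have hτpos : 0 < τ := by positivity
  have hMτ : M * τ = ε / 2 := by
    rw [hτ]
    field_simp
  -- x is M-Lipschitz forward in time
  have hlip : ∀ t u : ℝ, 0 ≤ t → t ≤ u → ‖x u - x t‖ ≤ M * (u - t) := by
    intro t u ht htu
    have := Convex.norm_image_sub_le_of_norm_hasDerivWithin_le
      (f := x) (f' := fun u => sStar d μ σε σT α (x u)) (s := Set.Icc t u)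
      (fun v hv => (hx v).hasDerivWithinAt)
      (fun v hv => hMb (x v) (hxS v (le_trans ht hv.1)))
      (convex_Icc t u) (Set.left_mem_Icc.2 htu) (Set.right_mem_Icc.2 htu)
    calc ‖x u - x t‖ ≤ M * ‖u - t‖ := this
      _ = M * (u - t) := by rw [Real.norm_eq_abs, abs_of_nonneg (by linarith)]
  -- compact visiting set and uniform derivative bound
  set Sε : Set (EuclideanSpace ℝ (Fin d)) :=
    S ∩ {w | ε / 2 ≤ Metric.infDist w Eset} with hSε
  have hSεcomp : IsCompact Sε :=
    hScomp.inter_right (isClosed_le continuous_const (Metric.continuous_infDist_pt Eset))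
  have hSεne : Sε.Nonempty := by
    obtain ⟨t, -, ht0, htε⟩ := hfreq' 0
    exact ⟨x t, hxS t ht0, by simpa using le_trans (by linarith) htε⟩
  obtain ⟨w₀, hw₀S, hw₀'⟩ := hSεcomp.exists_isMinOn hSεne hgcont.continuousOn
  have hw₀ : ∀ w ∈ Sε, g w₀ ≤ g w := fun w hw => hw₀' hw
  have hδpos : 0 < g w₀ := by
    rcases eq_or_ne (N w₀) 0 with h0 | h0
    · exfalso
      have : w₀ ∈ Eset := by
        rw [hEset, Set.mem_setOf_eq, hgradV, h0]
      have h2 := Metric.infDist_zero_of_mem this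
      have h3 := hw₀S.2
      rw [Set.mem_setOf_eq, h2] at h3
      linarith
    · have h1 : 0 < ‖N w₀‖ := norm_pos_iff.2 h0
      have h2 := hLt_pos w₀
      rw [hg]
      positivity
  set δ : ℝ := g w₀ with hδ
  -- one step gain
  have hstep : ∀ t : ℝ, 0 ≤ t → ε ≤ Metric.infDist (x t) Eset →
      V (x t) + δ * τ ≤ V (x (t + τ)) := by
    intro t ht htε
    have hmem : ∀ u ∈ Set.Icc t (t + τ), x u ∈ Sε := by
      intro u hu
      have hu0 : 0 ≤ u := le_trans ht hu.1
      refine ⟨hxS u hu0, ?_⟩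
      rw [Set.mem_setOf_eq]
      have hd : dist (x t) (x u) ≤ ε / 2 := by
        rw [dist_eq_norm, norm_sub_rev]
        calc ‖x u - x t‖ ≤ M * (u - t) := hlip t u ht hu.1
          _ ≤ M * τ := by nlinarith [hu.2, hM1]
          _ = ε / 2 := hMτ
      have := Metric.infDist_le_infDist_add_dist (x := x t) (y := x u) (s := Eset)
      linarith
    -- monotonicity of V (x u) - δ u on the interval
    have hmono2 : MonotoneOn (fun u => V (x u) - δ * u) (Set.Icc t (t + τ)) := by
      apply monotoneOn_of_deriv_nonneg (convex_Icc _ _)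
      · exact ((hVcont.comp (continuous_iff_continuousAt.2
          fun u => (hx u).continuousAt)).sub (continuous_const.mul continuous_id)).continuousOn
      · intro u hu
        exact ((hG u).sub ((hasDerivAt_id u).const_mul δ)).differentiableAt.differentiableWithinAt
      · intro u hu
        rw [interior_Icc] at hu
        have hud : HasDerivAt (fun u => V (x u) - δ * u) (g (x u) - δ) u := by
          exact ((hG u).sub ((hasDerivAt_id u).const_mul δ)).congr_deriv (by ring)
        rw [hud.deriv, sub_nonneg, hδ]
        exact hw₀ (x u) (hmem u (Set.mem_Icc_of_Ioo hu))
    have h1 := hmono2 (Set.left_mem_Icc.2 (by linarith)) (Set.right_mem_Icc.2 (by linarith))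
      (by linarith)
    simp only at h1
    nlinarith [h1]
  -- build the escaping sequence
  set F : ℝ → ℝ := fun T => (hfreq' T).choose with hF
  have hFprop : ∀ T, T ≤ F T ∧ 0 ≤ F T ∧ ε ≤ Metric.infDist (x (F T)) Eset :=
    fun T => (hfreq' T).choose_spec
  set seq : ℕ → ℝ := fun n => Nat.rec (F 0) (fun _ prev => F (prev + τ)) n with hseq
  have hseq0 : (0:ℝ) ≤ seq 0 := (hFprop 0).2.1
  have hseqnn : ∀ n, 0 ≤ seq n := by
    intro n
    cases n with
    | zero => exact hseq0
    | succ k => exact (hFprop _).2.1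
  have hseqε : ∀ n, ε ≤ Metric.infDist (x (seq n)) Eset := by
    intro n
    cases n with
    | zero => exact (hFprop 0).2.2
    | succ k => exact (hFprop _).2.2
  have hseqstep : ∀ n, seq n + τ ≤ seq (n + 1) := fun n => (hFprop (seq n + τ)).1
  -- growth of V along the sequence
  have hgrow : ∀ n : ℕ, V (x (seq 0)) + (n + 1 : ℝ) * (δ * τ) ≤ V (x (seq n + τ)) := by
    intro n
    induction n with
    | zero => simpa using hstep (seq 0) (hseqnn 0) (hseqε 0)
    | succ k ih =>
      have h1 := hstep (seq (k + 1)) (hseqnn (k + 1)) (hseqε (k + 1))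
      have h2 : V (x (seq k + τ)) ≤ V (x (seq (k + 1))) := hymono (hseqstep k)
      push_cast
      push_cast at ih
      linarith
  obtain ⟨n, hn⟩ := exists_nat_gt ((Phi σε σT s₀ 0 - V (x (seq 0))) / (δ * τ))
  have hδτ : 0 < δ * τ := mul_pos hδpos hτpos
  have h1 := hgrow n
  have h2 := hV_le (x (seq n + τ))
  rw [div_lt_iff₀ hδτ] at hn
  nlinarith
end PhiDeriv
end
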